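/- arXiv:2003.09449 — 4 statements merged into one kernel-verified Lean document; each statement's English description precedes it below -/
import Mathlib

section
/- Let X be an infinite-dimensional complex Banach space and P : X → ℂ a nonzero continuous 2-homogeneous polynomial. If M ⊆ X is a linear subspace with P identically zero on M, then there exists an infinite-dimensional P-maximal subspace H of X with M ⊆ H. -/
set_option linter.unusedSectionVars false
set_option maxHeartbeats 1000000

section Helpers

variable {X : Type*} [NormedAddCommGroup X] [NormedSpace ℂ X]

private lemma upd0' (x y z : X) : Function.update ![x, y] 0 z = ![z, y] := by
  ext i; fin_cases i <;> simp

private lemma upd1' (x y z : X) : Function.update ![x, y] 1 z = ![x, z] := by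
  ext i; fin_cases i <;> simp

variable (A : MultilinearMap ℂ (fun _ : Fin 2 => X) ℂ)

private lemma B_add_left' (x x' y : X) : A ![x + x', y] = A ![x, y] + A ![x', y] := by
  have h := A.map_update_add ![x, y] 0 x x'
  rwa [upd0', upd0', upd0'] at h

private lemma B_add_right' (x y y' : X) : A ![x, y + y'] = A ![x, y] + A ![x, y'] := by
  have h := A.map_update_add ![x, y] 1 y y'
  rwa [upd1', upd1', upd1'] at h

private lemma B_smul_left' (c : ℂ) (x y : X) : A ![c • x, y] = c * A ![x, y] := by
  have h := A.map_update_smul ![x, y] 0 c x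
  rwa [upd0', upd0', smul_eq_mul] at h

private lemma B_smul_right' (c : ℂ) (x y : X) : A ![x, c • y] = c * A ![x, y] := by
  have h := A.map_update_smul ![x, y] 1 c y
  rwa [upd1', upd1', smul_eq_mul] at h

private lemma expand2 (h x : X) (c : ℂ) :
    A ![h + c • x, h + c • x]
      = A ![h, h] + c * A ![h, x] + c * A ![x, h] + c ^ 2 * A ![x, x] := by
  simp only [B_add_left' A, B_add_right' A, B_smul_left' A, B_smul_right' A]; ring

private lemma expand2' (u v : X) (s t : ℂ) :
    A ![s • u + t • v, s • u + t • v]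
      = s ^ 2 * A ![u, u] + s * t * (A ![u, v] + A ![v, u]) + t ^ 2 * A ![v, v] := by
  simp only [B_add_left' A, B_add_right' A, B_smul_left' A, B_smul_right' A]; ring

private lemma diag_eq' (x : X) : (fun _ : Fin 2 => x) = ![x, x] := by
  ext i; fin_cases i <;> rfl

end Helpers

/-- If a submodule and its quotient are finite dimensional, so is the whole space. -/
private lemma findim_of_sub_quot {V : Type*} [AddCommGroup V] [Module ℂ V]
    (p : Submodule ℂ V) (h1 : FiniteDimensional ℂ p) (h2 : FiniteDimensional ℂ (V ⧸ p)) :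
    FiniteDimensional ℂ V := by
  have h1' := Module.rank_lt_aleph0_iff.mpr h1
  have h2' := Module.rank_lt_aleph0_iff.mpr h2
  refine Module.rank_lt_aleph0_iff.mp ?_
  rw [← rank_quotient_add_rank_of_divisionRing p]
  exact Cardinal.add_lt_aleph0 h2' h1'

/-- Existence of a nontrivial zero of a complex quadratic in two variables. -/
private lemma quad_zero (a b c : ℂ) :
    ∃ s t : ℂ, ¬(s = 0 ∧ t = 0) ∧ s ^ 2 * a + s * t * b + t ^ 2 * c = 0 := by
  by_cases ha : a = 0
  · exact ⟨1, 0, by simp, by simp [ha]⟩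
  · obtain ⟨r, hr⟩ := IsAlgClosed.exists_pow_nat_eq (b ^ 2 - 4 * a * c) (n := 2) (by norm_num)
    refine ⟨(-b + r) / (2 * a), 1, by simp, ?_⟩
    field_simp
    linear_combination hr

/-- `P : X → ℂ` is a 2-homogeneous polynomial: there is a symmetric bilinear
(2-linear) form `A` with `P x = A (x, x)`. -/
def IsHomogPoly {X : Type*} [NormedAddCommGroup X] [NormedSpace ℂ X]
    (n : ℕ) (P : X → ℂ) : Prop :=
  ∃ A : MultilinearMap ℂ (fun _ : Fin n => X) ℂ,
    (∀ (σ : Equiv.Perm (Fin n)) (v : Fin n → X), (A fun i => v (σ i)) = A v) ∧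
    ∀ x, P x = A fun _ => x

/-- `P` is a continuous `n`-homogeneous polynomial: homogeneous and bounded on
the unit ball, i.e. `‖P x‖ ≤ C‖x‖ⁿ` for some constant `C`. -/
def IsContHomogPoly {X : Type*} [NormedAddCommGroup X] [NormedSpace ℂ X]
    (n : ℕ) (P : X → ℂ) : Prop :=
  IsHomogPoly n P ∧ ∃ C : ℝ, ∀ x, ‖P x‖ ≤ C * ‖x‖ ^ n

/-- `M` is a `P`-maximal subspace: a proper subspace on which `P` vanishes identically
and which is maximal among subspaces on which `P` vanishes. -/
def IsPMaximal {X : Type*} [NormedAddCommGroup X] [NormedSpace ℂ X]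
    (P : X → ℂ) (M : Submodule ℂ X) : Prop :=
  M ≠ ⊤ ∧ (∀ x ∈ M, P x = 0) ∧
    ∀ M₁ : Submodule ℂ X, M ≤ M₁ → (∀ x ∈ M₁, P x = 0) → M₁ = M

/-- Let `X` be an infinite-dimensional complex Banach space and `P` a nonzero continuous
2-homogeneous polynomial on `X`. If `P` vanishes identically on a subspace `M`, then there is
an infinite-dimensional `P`-maximal subspace `H` containing `M`. -/
theorem exists_infiniteDim_pMaximal {X : Type*} [NormedAddCommGroup X] [NormedSpace ℂ X]
    [CompleteSpace X] (hX : ¬ FiniteDimensional ℂ X)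
    (P : X → ℂ) (hP : IsContHomogPoly 2 P) (hP0 : P ≠ 0)
    (M : Submodule ℂ X) (hM : ∀ x ∈ M, P x = 0) :
    ∃ H : Submodule ℂ X, IsPMaximal P H ∧ ¬ FiniteDimensional ℂ H ∧ M ≤ H := by
  classical
  obtain ⟨⟨A, hsym, hPA⟩, -⟩ := hP
  have hPB : ∀ x, P x = A ![x, x] := fun x => (hPA x).trans (congrArg A (diag_eq' x))
  have hsw : ∀ x y : X, A ![x, y] = A ![y, x] := by
    intro x y
    have h := hsym (Equiv.swap 0 1) ![y, x]
    have he : (fun i => ![y, x] (Equiv.swap 0 1 i)) = ![x, y] := by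
      ext i; fin_cases i <;> simp
    rwa [he] at h
  -- Zorn's lemma
  obtain ⟨H, hMH, hHS, hHmax⟩ :=
    zorn_le_nonempty₀ {N : Submodule ℂ X | ∀ x ∈ N, P x = 0}
      (fun c hcS hchain N hNc => by
        refine ⟨sSup c, ?_, fun z hz => le_sSup hz⟩
        intro x hx
        obtain ⟨N', hN', hxN'⟩ :=
          (Submodule.mem_sSup_of_directed ⟨N, hNc⟩ hchain.directedOn).mp hx
        exact hcS hN' x hxN') M hM
  refine ⟨H, ⟨?_, hHS, ?_⟩, ?_, hMH⟩
  · -- H ≠ ⊤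
    intro htop
    obtain ⟨x, hx⟩ : ∃ x, P x ≠ 0 := by
      by_contra h; push_neg at h; exact hP0 (funext h)
    exact hx (hHS x (htop ▸ Submodule.mem_top))
  · -- maximality clause
    intro M₁ hle h0
    exact le_antisymm (hHmax h0 hle) hle
  · -- infinite dimensionality
    intro hfin
    haveI : FiniteDimensional ℂ H := hfin
    set Bl : X →ₗ[ℂ] X →ₗ[ℂ] ℂ :=
      LinearMap.mk₂ ℂ (fun x y => A ![x, y]) (B_add_left' A) (B_smul_left' A)
        (B_add_right' A) (B_smul_right' A) with hBl
    set Φ : X →ₗ[ℂ] (H →ₗ[ℂ] ℂ) :=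
      { toFun := fun x => (Bl x).comp H.subtype
        map_add' := fun x y => by
          ext h; simp [hBl]
        map_smul' := fun c x => by
          ext h; simp [hBl] } with hΦ
    set K := LinearMap.ker Φ with hK
    haveI : FiniteDimensional ℂ (LinearMap.range Φ) := inferInstance
    have hXK : FiniteDimensional ℂ (X ⧸ K) := (Φ.quotKerEquivRange).symm.finiteDimensional
    have hKnot : ¬ FiniteDimensional ℂ K := fun h => hX (findim_of_sub_quot K h hXK)
    set f : K →ₗ[ℂ] X ⧸ H := H.mkQ.comp K.subtype with hf
    have hker : FiniteDimensional ℂ (LinearMap.ker f) := by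
      refine FiniteDimensional.of_injective
        (LinearMap.codRestrict H ((K.subtype).comp (LinearMap.ker f).subtype) ?_) ?_
      · rintro ⟨⟨x, hxK⟩, hxker⟩
        have : H.mkQ x = 0 := hxker
        simpa [Submodule.Quotient.mk_eq_zero] using this
      · intro a b hab
        have h1 := congrArg Subtype.val hab
        simp only [LinearMap.codRestrict_apply, LinearMap.comp_apply,
          Submodule.subtype_apply] at h1
        exact Subtype.ext (Subtype.ext h1)
    have hrange : ¬ FiniteDimensional ℂ (LinearMap.range f) := by
      intro h
      haveI := h
      exact hKnot (findim_of_sub_quot (LinearMap.ker f) hker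
        (f.quotKerEquivRange).symm.finiteDimensional)
    obtain ⟨y₁, hy₁r, hy₁0⟩ : ∃ y, y ∈ LinearMap.range f ∧ y ≠ 0 := by
      by_contra hcon; push_neg at hcon
      refine hrange (Submodule.finiteDimensional_of_le (S₂ := ⊥) ?_)
      intro y hy
      simpa using hcon y hy
    obtain ⟨y₂, hy₂r, hy₂s⟩ : ∃ y, y ∈ LinearMap.range f ∧ y ∉ Submodule.span ℂ {y₁} := by
      by_contra hcon; push_neg at hcon
      exact hrange (Submodule.finiteDimensional_of_le (fun y hy => hcon y hy))
    obtain ⟨u', hu'⟩ := hy₁r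
    obtain ⟨v', hv'⟩ := hy₂r
    set u : X := (u' : X) with hu
    set v : X := (v' : X) with hv
    have huK : u ∈ K := u'.2
    have hvK : v ∈ K := v'.2
    have hmku : H.mkQ u = y₁ := hu'
    have hmkv : H.mkQ v = y₂ := hv'
    have hBK : ∀ x ∈ K, ∀ h ∈ H, A ![x, h] = 0 := by
      intro x hx h hh
      have h0 : Φ x = 0 := hx
      calc A ![x, h] = (Φ x) ⟨h, hh⟩ := rfl
        _ = 0 := by rw [h0]; rfl
    have hind : ∀ s t : ℂ, s • u + t • v ∈ H → s = 0 ∧ t = 0 := by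
      intro s t hst
      have h0 : s • y₁ + t • y₂ = 0 := by
        have h1 : H.mkQ (s • u + t • v) = 0 := (Submodule.Quotient.mk_eq_zero H).mpr hst
        rw [map_add, map_smul, map_smul, hmku, hmkv] at h1
        exact h1
      have ht : t = 0 := by
        by_contra ht0
        apply hy₂s
        have h1 : t • y₂ = -(s • y₁) := by
          rw [eq_neg_iff_add_eq_zero, add_comm]; exact h0
        refine Submodule.mem_span_singleton.mpr ⟨t⁻¹ * (-s), ?_⟩
        calc (t⁻¹ * (-s)) • y₁ = t⁻¹ • ((-s) • y₁) := by rw [smul_smul]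
          _ = t⁻¹ • (t • y₂) := by rw [neg_smul, ← h1]
          _ = y₂ := by rw [smul_smul, inv_mul_cancel₀ ht0, one_smul]
      rw [ht, zero_smul, add_zero] at h0
      rcases smul_eq_zero.mp h0 with hs | hy
      · exact ⟨hs, ht⟩
      · exact absurd hy hy₁0
    obtain ⟨s, t, hst0, hq⟩ := quad_zero (A ![u, u]) (A ![u, v] + A ![v, u]) (A ![v, v])
    set x := s • u + t • v with hxdef
    have hxK : x ∈ K := K.add_mem (K.smul_mem s huK) (K.smul_mem t hvK)
    have hPx : P x = 0 := by
      rw [hPB, hxdef, expand2' A]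
      linear_combination hq
    have hxH : x ∉ H := fun hxh => hst0 (hind s t hxh)
    have hNS : ∀ y ∈ H ⊔ Submodule.span ℂ {x}, P y = 0 := by
      intro y hy
      obtain ⟨h, hh, z, hz, rfl⟩ := Submodule.mem_sup.mp hy
      obtain ⟨c, rfl⟩ := Submodule.mem_span_singleton.mp hz
      have e1 : A ![x, h] = 0 := hBK x hxK h hh
      have e2 : A ![h, x] = 0 := (hsw h x).trans e1
      have e3 : A ![h, h] = 0 := (hPB h).symm.trans (hHS h hh)
      have e4 : A ![x, x] = 0 := (hPB x).symm.trans hPx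
      rw [hPB, expand2 A, e1, e2, e3, e4]
      ring
    have hle : H ⊔ Submodule.span ℂ {x} ≤ H := hHmax hNS le_sup_left
    exact hxH (hle (Submodule.mem_sup_right (Submodule.mem_span_singleton_self x)))
end

section
/- Let X be a non-separable Banach space. Then X has the NIP if and only if for every countable family (φ_i)_{i ∈ ℕ} of continuous linear functionals on X, the subspace ⋂_{i ∈ ℕ} ker φ_i is non-separable. -/
/-- A Banach space `X` has the nontrivial intersection property (NIP) if for every countable
family of continuous linear functionals on `X` the intersection of their kernels is
nontrivial. -/
def HasNIP (𝕜 X : Type*) [RCLike 𝕜] [NormedAddCommGroup X] [NormedSpace 𝕜 X] : Prop :=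
  ∀ φ : ℕ → (X →L[𝕜] 𝕜), (⨅ i, LinearMap.ker (φ i : X →ₗ[𝕜] 𝕜)) ≠ ⊥

/-- A non-separable Banach space `X` has the NIP if and only if for every countable family
`(φ_i)` of continuous linear functionals the subspace `⋂ i, ker φ_i` is non-separable. -/
theorem hasNIP_iff_nonseparable_inter {𝕜 X : Type*} [RCLike 𝕜] [NormedAddCommGroup X]
    [NormedSpace 𝕜 X] [CompleteSpace X] (hX : ¬ TopologicalSpace.SeparableSpace X) :
    HasNIP 𝕜 X ↔
      ∀ φ : ℕ → (X →L[𝕜] 𝕜),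
        ¬ TopologicalSpace.IsSeparable ((⨅ i, LinearMap.ker (φ i : X →ₗ[𝕜] 𝕜) : Submodule 𝕜 X) : Set X) := by
  classical
  constructor
  · intro h φ hsep
    have hnt : Nontrivial X := by
      by_contra hn
      rw [not_nontrivial_iff_subsingleton] at hn
      exact hX inferInstance
    obtain ⟨c, hc, hsub⟩ := hsep
    obtain ⟨y, hy⟩ := (hc.insert 0).exists_eq_range (Set.insert_nonempty _ _)
    set ψ : ℕ → (X →L[𝕜] 𝕜) := fun n =>
      if hn : y n = 0 then 0 else (exists_dual_vector 𝕜 (y n) (norm_ne_zero_iff.mpr hn)).choose with hψdef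
    have hspec : ∀ n, (hn : y n ≠ 0) →
        ‖ψ n‖ = 1 ∧ ψ n (y n) = (‖y n‖ : 𝕜) := by
      intro n hn
      simp only [hψdef, dif_neg hn]
      exact (exists_dual_vector 𝕜 (y n) (norm_ne_zero_iff.mpr hn)).choose_spec
    set χ : ℕ → (X →L[𝕜] 𝕜) := fun n =>
      if n % 2 = 0 then φ (n / 2) else ψ (n / 2) with hχdef
    obtain ⟨x, hx, hx0⟩ := Submodule.exists_mem_ne_zero_of_ne_bot (h χ)
    rw [Submodule.mem_iInf] at hx
    have hφ : ∀ i, φ i x = 0 := by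
      intro i
      have := hx (2 * i)
      simpa [hχdef, Nat.mul_mod_right, Nat.mul_div_cancel_left] using this
    have hψx : ∀ i, ψ i x = 0 := by
      intro i
      have := hx (2 * i + 1)
      have h1 : (2 * i + 1) % 2 = 1 := by omega
      have h2 : (2 * i + 1) / 2 = i := by omega
      simpa [hχdef, h1, h2] using this
    have hxY : x ∈ (⨅ i, LinearMap.ker (φ i : X →ₗ[𝕜] 𝕜) : Submodule 𝕜 X) :=
      Submodule.mem_iInf _ |>.mpr fun i => hφ i
    have hxcl : x ∈ closure (Set.range y) := by
      rw [← hy]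
      exact closure_mono (Set.subset_insert 0 c) (hsub hxY)
    have hxpos : 0 < ‖x‖ := norm_pos_iff.mpr hx0
    obtain ⟨b, hb, hbd⟩ := Metric.mem_closure_iff.mp hxcl (‖x‖ / 2) (by linarith)
    obtain ⟨n, rfl⟩ := hb
    by_cases hn : y n = 0
    · rw [hn] at hbd
      simp only [dist_zero_right] at hbd
      linarith
    · obtain ⟨hnorm, hval⟩ := hspec n hn
      have h1 : ‖y n‖ = ‖ψ n (y n)‖ := by
        rw [hval, RCLike.norm_ofReal, abs_norm]
      have h2 : ψ n (y n) = ψ n (y n - x) := by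
        rw [map_sub, hψx n, sub_zero]
      have h3 : ‖ψ n (y n - x)‖ ≤ ‖ψ n‖ * ‖y n - x‖ := (ψ n).le_opNorm _
      have h4 : ‖y n - x‖ < ‖x‖ / 2 := by
        rw [← dist_eq_norm, dist_comm]
        exact hbd
      have h5 : ‖y n‖ < ‖x‖ / 2 := by
        rw [h1, h2]
        calc ‖ψ n (y n - x)‖ ≤ ‖ψ n‖ * ‖y n - x‖ := h3
          _ = ‖y n - x‖ := by rw [hnorm, one_mul]
          _ < ‖x‖ / 2 := h4
      have h6 : ‖x‖ ≤ ‖x - y n‖ + ‖y n‖ := by simpa using norm_add_le (x - y n) (y n)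
      have h7 : ‖x - y n‖ = dist x (y n) := (dist_eq_norm _ _).symm
      rw [h7] at h6
      linarith
  · intro h φ hbot
    apply h φ
    rw [hbot]
    simpa using (Set.countable_singleton (0 : X)).isSeparable
end

section
/- The quotient Banach space ℓ∞/c₀ (the space of bounded scalar sequences modulo the closed subspace of sequences converging to zero) has the NIP. -/
set_option maxHeartbeats 1000000

open Filter

/-- `c₀`, the subspace of `ℓ∞` consisting of the (bounded) sequences converging to zero. -/
noncomputable def czero : Submodule ℂ (lp (fun _ : ℕ => ℂ) ⊤) where
  carrier := {x | Tendsto (fun i => x i) atTop (nhds 0)}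
  zero_mem' := by
    simpa [lp.coeFn_zero] using (tendsto_const_nhds :
      Tendsto (fun _ : ℕ => (0 : ℂ)) atTop (nhds 0))
  add_mem' := by
    intro a b ha hb
    have h := ha.add hb
    rw [add_zero] at h
    simpa [lp.coeFn_add] using h
  smul_mem' := by
    intro c x hx
    have h := hx.const_smul c
    rw [smul_zero] at h
    simpa [lp.coeFn_smul] using h


namespace NIPaux


/-- An auxiliary rational in the interval `(r - 1/(n+1), r - 1/(n+2))`. -/
lemma q_aux (r : ℝ) (n : ℕ) : r - 1/((n:ℝ)+1) < r - 1/((n:ℝ)+2) := by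
  have h1 : (0:ℝ) < (n:ℝ)+1 := by positivity
  have : (1:ℝ)/((n:ℝ)+2) < 1/((n:ℝ)+1) := by
    apply one_div_lt_one_div_of_lt h1; linarith
  linarith

noncomputable def q (r : ℝ) (n : ℕ) : ℚ :=
  (exists_rat_btwn (q_aux r n)).choose

lemma q_mem (r : ℝ) (n : ℕ) :
    r - 1/((n:ℝ)+1) < (q r n : ℝ) ∧ (q r n : ℝ) < r - 1/((n:ℝ)+2) :=
  (exists_rat_btwn (q_aux r n)).choose_spec

lemma q_injective (r : ℝ) : Function.Injective (q r) := by
  intro n m h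
  by_contra hnm
  rcases Nat.lt_or_ge n m with hlt | hge
  · have h1 := (q_mem r n).2
    have h2 := (q_mem r m).1
    rw [h] at h1
    have : (1:ℝ)/((m:ℝ)+1) ≤ 1/((n:ℝ)+2) := by
      apply one_div_le_one_div_of_le (by positivity)
      have : (n:ℝ) + 1 ≤ (m:ℝ) := by exact_mod_cast hlt
      linarith
    linarith
  · have hlt : m < n := lt_of_le_of_ne hge (fun e => hnm e.symm)
    have h1 := (q_mem r m).2
    have h2 := (q_mem r n).1
    rw [← h] at h1
    have : (1:ℝ)/((n:ℝ)+1) ≤ 1/((m:ℝ)+2) := by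
      apply one_div_le_one_div_of_le (by positivity)
      have : (m:ℝ) + 1 ≤ (n:ℝ) := by exact_mod_cast hlt
      linarith
    linarith

/-- An almost disjoint family of infinite subsets of `ℕ`, indexed by `ℝ`. -/
def A (r : ℝ) : Set ℕ := Set.range fun n => Encodable.encode (q r n)

lemma A_infinite (r : ℝ) : (A r).Infinite :=
  Set.infinite_range_of_injective (Encodable.encode_injective.comp (q_injective r))

lemma A_almost_disjoint {r s : ℝ} (h : r ≠ s) : (A r ∩ A s).Finite := by
  have hrs : 0 < |r - s| := abs_pos.mpr (sub_ne_zero.mpr h)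
  obtain ⟨N, hN⟩ := exists_nat_gt (2 / |r - s|)
  have hN0 : (0:ℝ) < N := lt_trans (by positivity) hN
  have hd : 2 / (N:ℝ) < |r - s| := by
    rw [div_lt_iff₀ hN0]
    have := (div_lt_iff₀ hrs).mp hN
    linarith [mul_comm (N:ℝ) |r - s|]
  apply Set.Finite.subset (Set.Finite.union
    (Set.Finite.image (fun n => Encodable.encode (q r n)) (Set.finite_Iio N))
    (Set.Finite.image (fun n => Encodable.encode (q s n)) (Set.finite_Iio N)))
  rintro i ⟨⟨n, rfl⟩, ⟨m, hm⟩⟩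
  have hq : q s m = q r n := Encodable.encode_injective hm
  by_cases hn : n < N
  · exact Or.inl ⟨n, hn, rfl⟩
  by_cases hm' : m < N
  · exact Or.inr ⟨m, hm', hm⟩
  exfalso
  push_neg at hn hm'
  have h1 := (q_mem r n).1
  have h2 := (q_mem r n).2
  have h3 := (q_mem s m).1
  have h4 := (q_mem s m).2
  rw [hq] at h3 h4
  have hn' : (N:ℝ) ≤ (n:ℝ) := by exact_mod_cast hn
  have hm'' : (N:ℝ) ≤ (m:ℝ) := by exact_mod_cast hm'
  have e1 : (1:ℝ)/((n:ℝ)+1) ≤ 1/(N:ℝ) := by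
    apply one_div_le_one_div_of_le hN0; linarith
  have e2 : (1:ℝ)/((m:ℝ)+1) ≤ 1/(N:ℝ) := by
    apply one_div_le_one_div_of_le hN0; linarith
  have e3 : (0:ℝ) < 1/((n:ℝ)+2) := by positivity
  have e4 : (0:ℝ) < 1/((m:ℝ)+2) := by positivity
  have : |r - s| < 2 / (N:ℝ) := by
    rw [abs_sub_lt_iff]
    constructor <;> · rw [div_eq_mul_one_div]; nlinarith
  linarith



noncomputable def ind (B : Set ℕ) : lp (fun _ : ℕ => ℂ) ⊤ :=
  ⟨B.indicator (fun _ => (1:ℂ)), memℓp_infty ⟨1, by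
    rintro x ⟨i, rfl⟩
    by_cases h : i ∈ B <;>
      simp [Set.indicator_of_mem, Set.indicator_of_notMem, h]⟩⟩

lemma ind_apply (B : Set ℕ) (i : ℕ) :
    (ind B : ∀ _ : ℕ, ℂ) i = B.indicator (fun _ => (1:ℂ)) i := rfl


lemma norm_sum_le (s : Finset ℝ) (c : ℝ → ℂ) (hc : ∀ r, ‖c r‖ ≤ 1) :
    ‖∑ r ∈ s, c r • czero.mkQ (ind (A r))‖ ≤ 1 := by
  classical
  set X : lp (fun _ : ℕ => ℂ) ⊤ := ∑ r ∈ s, c r • ind (A r) with hX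
  have hmap : ∑ r ∈ s, c r • czero.mkQ (ind (A r)) = czero.mkQ X := by
    rw [hX, map_sum]
    exact Finset.sum_congr rfl fun r _ => (map_smul czero.mkQ (c r) (ind (A r))).symm
  set F : Set ℕ := ⋃ r ∈ s, ⋃ r' ∈ s, ⋃ (_ : r ≠ r'), (A r ∩ A r') with hF
  have hFfin : F.Finite := by
    apply Set.Finite.biUnion s.finite_toSet
    intro r _
    apply Set.Finite.biUnion s.finite_toSet
    intro r' _
    rw [Set.iUnion_eq_if]
    split
    · exact A_almost_disjoint ‹_›
    · exact Set.finite_empty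
  have hXi : ∀ i, (X : ∀ _ : ℕ, ℂ) i
      = ∑ r ∈ s, c r * (A r).indicator (fun _ => (1:ℂ)) i := by
    intro i
    rw [hX, lp.coeFn_sum, Finset.sum_apply]
    refine Finset.sum_congr rfl fun r _ => ?_
    rw [lp.coeFn_smul, Pi.smul_apply, ind_apply, smul_eq_mul]
  have hbound : ∀ i, i ∉ F → ‖(X : ∀ _ : ℕ, ℂ) i‖ ≤ 1 := by
    intro i hi
    rw [hXi]
    by_cases hex : ∃ r ∈ s, i ∈ A r
    · obtain ⟨r₀, hr₀s, hr₀⟩ := hex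
      rw [Finset.sum_eq_single r₀]
      · rw [Set.indicator_of_mem hr₀]
        simpa using hc r₀
      · intro r hrs hne
        have hiA : i ∉ A r := by
          intro hiA
          apply hi
          rw [hF]
          simp only [Set.mem_iUnion]
          exact ⟨r, hrs, r₀, hr₀s, hne, hiA, hr₀⟩
        simp [Set.indicator_of_notMem hiA]
      · intro h; exact absurd hr₀s h
    · push_neg at hex
      rw [Finset.sum_eq_zero]
      · norm_num
      · intro r hr
        simp [Set.indicator_of_notMem (hex r hr)]
  set Y : lp (fun _ : ℕ => ℂ) ⊤ :=
    ⟨fun i => if i ∈ F then 0 else (X : ∀ _ : ℕ, ℂ) i, memℓp_infty ⟨1, by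
      rintro x ⟨i, rfl⟩
      dsimp only
      split
      · simp
      · exact hbound i ‹_›⟩⟩ with hY
  have hYapp : ∀ i, (Y : ∀ _ : ℕ, ℂ) i
      = if i ∈ F then 0 else (X : ∀ _ : ℕ, ℂ) i := fun i => rfl
  have hXY : X - Y ∈ czero := by
    show Tendsto (fun i => ((X - Y : lp (fun _ : ℕ => ℂ) ⊤) : ∀ _ : ℕ, ℂ) i) atTop (nhds 0)
    obtain ⟨N, hN⟩ := hFfin.bddAbove
    have hev : ∀ᶠ i in atTop, ((X - Y : lp (fun _ : ℕ => ℂ) ⊤) : ∀ _ : ℕ, ℂ) i = 0 := by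
      rw [eventually_atTop]
      refine ⟨N + 1, fun i hi => ?_⟩
      have hiF : i ∉ F := fun h => by
        have := hN h
        omega
      rw [lp.coeFn_sub, Pi.sub_apply, hYapp, if_neg hiF, sub_self]
    exact Tendsto.congr' (EventuallyEq.symm hev) tendsto_const_nhds
  have hmkeq : czero.mkQ X = czero.mkQ Y := by
    rw [Submodule.mkQ_apply, Submodule.mkQ_apply]
    exact (Submodule.Quotient.eq czero).mpr hXY
  have hnormY : ‖Y‖ ≤ 1 := by
    apply lp.norm_le_of_forall_le zero_le_one
    intro i
    rw [hYapp]
    split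
    · simp
    · exact hbound i ‹_›
  rw [hmap, hmkeq]
  exact le_trans (Submodule.Quotient.norm_mk_le czero Y) hnormY


lemma countable_nonzero (φ : (lp (fun _ : ℕ => ℂ) ⊤ ⧸ czero) →L[ℂ] ℂ) :
    {r : ℝ | φ (czero.mkQ (ind (A r))) ≠ 0}.Countable := by
  classical
  set v : ℝ → (lp (fun _ : ℕ => ℂ) ⊤ ⧸ czero) := fun r => czero.mkQ (ind (A r)) with hv
  have key : ∀ t : Finset ℝ, ∑ r ∈ t, ‖φ (v r)‖ ≤ ‖φ‖ := by
    intro t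
    set c : ℝ → ℂ := fun r =>
      if φ (v r) = 0 then 0 else (starRingEnd ℂ) (φ (v r)) / (‖φ (v r)‖ : ℂ) with hcdef
    have hc : ∀ r, ‖c r‖ ≤ 1 := by
      intro r
      rw [hcdef]
      dsimp only
      split
      · simp
      · rename_i hz
        rw [norm_div]
        have h1 : ‖(starRingEnd ℂ) (φ (v r))‖ = ‖φ (v r)‖ := RCLike.norm_conj _
        have h2 : ‖((‖φ (v r)‖ : ℝ) : ℂ)‖ = ‖φ (v r)‖ := by
          rw [Complex.norm_real, norm_norm]
        rw [h1, h2, div_self (norm_ne_zero_iff.mpr hz)]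
    have hmul : ∀ r, c r * φ (v r) = (‖φ (v r)‖ : ℂ) := by
      intro r
      rw [hcdef]
      dsimp only
      split
      · rename_i hz
        rw [hz]
        simp
      · rename_i hz
        have hnz : ((‖φ (v r)‖ : ℝ) : ℂ) ≠ 0 := by
          exact_mod_cast norm_ne_zero_iff.mpr hz
        rw [div_mul_eq_mul_div, mul_comm ((starRingEnd ℂ) (φ (v r))), Complex.mul_conj,
          Complex.normSq_eq_norm_sq, sq, Complex.ofReal_mul]
        exact mul_div_cancel_right₀ _ hnz
    have h1 : φ (∑ r ∈ t, c r • v r) = ((∑ r ∈ t, ‖φ (v r)‖ : ℝ) : ℂ) := by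
      rw [map_sum]
      push_cast
      refine Finset.sum_congr rfl fun r _ => ?_
      rw [map_smul, smul_eq_mul, hmul]
    have h2 : ‖φ (∑ r ∈ t, c r • v r)‖ = ∑ r ∈ t, ‖φ (v r)‖ := by
      rw [h1, Complex.norm_real]
      exact abs_of_nonneg (Finset.sum_nonneg fun r _ => norm_nonneg _)
    rw [← h2]
    calc ‖φ (∑ r ∈ t, c r • v r)‖ ≤ ‖φ‖ * ‖∑ r ∈ t, c r • v r‖ := φ.le_opNorm _
      _ ≤ ‖φ‖ * 1 := by
          exact mul_le_mul_of_nonneg_left (norm_sum_le t c hc) (norm_nonneg φ)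
      _ = ‖φ‖ := mul_one _
  have hfin : ∀ k : ℕ, {r : ℝ | 1/((k:ℝ)+1) ≤ ‖φ (v r)‖}.Finite := by
    intro k
    rw [← Set.not_infinite]
    intro hinf
    obtain ⟨t, hts, htc⟩ := hinf.exists_subset_card_eq (Nat.ceil (((k:ℝ)+1) * ‖φ‖) + 1)
    have h1 : (t.card : ℝ) * (1/((k:ℝ)+1)) ≤ ∑ r ∈ t, ‖φ (v r)‖ := by
      have := Finset.card_nsmul_le_sum t (fun r => ‖φ (v r)‖) (1/((k:ℝ)+1))
        (fun r hr => hts hr)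
      rwa [nsmul_eq_mul] at this
    have h2 : (t.card : ℝ) ≤ ‖φ‖ * ((k:ℝ)+1) := by
      have hk : (0:ℝ) < (k:ℝ)+1 := by positivity
      have := le_trans h1 (key t)
      rw [mul_one_div, div_le_iff₀ hk] at this
      linarith
    have h3 : ((k:ℝ)+1) * ‖φ‖ ≤ (Nat.ceil (((k:ℝ)+1) * ‖φ‖) : ℝ) := Nat.le_ceil _
    have h4 : (t.card : ℝ) = (Nat.ceil (((k:ℝ)+1) * ‖φ‖) : ℝ) + 1 := by
      rw [htc]; push_cast; ring
    nlinarith [mul_comm (‖φ‖) ((k:ℝ)+1)]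
  have hsub : {r : ℝ | φ (v r) ≠ 0} ⊆ ⋃ k : ℕ, {r : ℝ | 1/((k:ℝ)+1) ≤ ‖φ (v r)‖} := by
    intro r hr
    obtain ⟨k, hk⟩ := exists_nat_one_div_lt (norm_pos_iff.mpr hr)
    exact Set.mem_iUnion.mpr ⟨k, le_of_lt hk⟩
  exact Set.Countable.mono hsub (Set.countable_iUnion fun k => (hfin k).countable)


end NIPaux

open NIPaux in
/-- The quotient Banach space `ℓ∞ / c₀` has the nontrivial intersection property: for every
countable family `(φ_i)` of continuous linear functionals on `ℓ∞ / c₀` the intersection of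
the kernels is nontrivial. -/
theorem linftyQuotCzero_hasNIP :
    ∀ φ : ℕ → ((lp (fun _ : ℕ => ℂ) ⊤ ⧸ czero) →L[ℂ] ℂ),
      (⨅ i, LinearMap.ker (φ i : (lp (fun _ : ℕ => ℂ) ⊤ ⧸ czero) →ₗ[ℂ] ℂ)) ≠ ⊥ := by
  intro φ
  have hcount : (⋃ i : ℕ, {r : ℝ | φ i (czero.mkQ (ind (A r))) ≠ 0}).Countable :=
    Set.countable_iUnion fun i => countable_nonzero (φ i)
  obtain ⟨r, hr⟩ : ∃ r : ℝ, r ∉ ⋃ i : ℕ, {r : ℝ | φ i (czero.mkQ (ind (A r))) ≠ 0} := by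
    by_contra h
    push_neg at h
    exact Cardinal.not_countable_real (hcount.mono fun x _ => h x)
  intro hbot
  have hker : czero.mkQ (ind (A r)) ∈ ⨅ i, LinearMap.ker (φ i : (lp (fun _ : ℕ => ℂ) ⊤ ⧸ czero) →ₗ[ℂ] ℂ) := by
    rw [Submodule.mem_iInf]
    intro i
    rw [LinearMap.mem_ker]
    by_contra hne
    exact hr (Set.mem_iUnion.mpr ⟨i, hne⟩)
  rw [hbot, Submodule.mem_bot] at hker
  have hmem : ind (A r) ∈ czero := by
    rw [← Submodule.Quotient.mk_eq_zero czero]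
    simpa [Submodule.mkQ_apply] using hker
  have htend : Tendsto (fun i => (ind (A r) : ∀ _ : ℕ, ℂ) i) atTop (nhds 0) := hmem
  have hev : ∀ᶠ i in atTop, ‖(ind (A r) : ∀ _ : ℕ, ℂ) i‖ < 1 :=
    (NormedAddCommGroup.tendsto_nhds_zero.mp htend) 1 one_pos
  rw [eventually_atTop] at hev
  obtain ⟨N, hN⟩ := hev
  obtain ⟨i, hiA, hiN⟩ := (A_infinite r).exists_gt N
  have := hN i (le_of_lt hiN)
  rw [ind_apply, Set.indicator_of_mem hiA] at this
  simp at this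
end

section
/- Let X be a complex Banach space, P : X → ℂ a nonzero continuous 2-homogeneous polynomial, and M a separable P-maximal subspace of X. Then there exists a countable family (φ_i)_{i ∈ ℕ} of continuous linear functionals on X such that M = ⋂_{i ∈ ℕ} ker φ_i. -/
private lemma fin2_update0 {X : Type*} (x x' y : X) :
    Function.update ![x, y] 0 x' = ![x', y] := by
  funext i; fin_cases i <;> simp

private lemma fin2_swap {X : Type*} (x y : X) :
    (fun i => ![x, y] ((Equiv.swap 0 1 : Equiv.Perm (Fin 2)) i)) = ![y, x] := by
  funext i; fin_cases i <;> simp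

private lemma fin2_const {X : Type*} (x : X) : (fun _ : Fin 2 => x) = ![x, x] := by
  funext i; fin_cases i <;> simp

/-- If `P` is a nonzero continuous 2-homogeneous polynomial on a complex Banach space `X`
and `M` is a separable `P`-maximal subspace, then `M` is the intersection of the kernels of
a countable family of continuous linear functionals. -/
theorem separable_pMaximal_eq_iInf_ker {X : Type*} [NormedAddCommGroup X] [NormedSpace ℂ X]
    [CompleteSpace X] (P : X → ℂ) (hP : IsContHomogPoly 2 P) (hP0 : P ≠ 0)
    (M : Submodule ℂ X) (hM : IsPMaximal P M)
    (hMsep : TopologicalSpace.IsSeparable (M : Set X)) :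
    ∃ φ : ℕ → (X →L[ℂ] ℂ), M = ⨅ i, LinearMap.ker (φ i : X →ₗ[ℂ] ℂ) := by
  obtain ⟨⟨A, hsymA, hPA⟩, C, hC⟩ := hP
  set B : X → X → ℂ := fun x y => A ![x, y] with hBdef
  have hPB : ∀ x, P x = B x x := by
    intro x
    simp only [hBdef]
    rw [hPA x]
    exact DFunLike.congr_arg A (fin2_const x)
  have hswap : ∀ x y, B x y = B y x := by
    intro x y
    have h := hsymA (Equiv.swap 0 1) ![x, y]
    rw [fin2_swap] at h
    simp only [hBdef]
    exact h.symm
  have hadd1 : ∀ x x' y, B (x + x') y = B x y + B x' y := by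
    intro x x' y
    have h := A.map_update_add ![x, y] 0 x x'
    simp only [fin2_update0] at h
    simpa only [hBdef] using h
  have hsmul1 : ∀ (c : ℂ) (x y : X), B (c • x) y = c * B x y := by
    intro c x y
    have h := A.map_update_smul ![x, y] 0 c x
    simp only [fin2_update0, smul_eq_mul] at h
    simpa only [hBdef] using h
  have hadd2 : ∀ x y y', B x (y + y') = B x y + B x y' := by
    intro x y y'; rw [hswap, hadd1, hswap y x, hswap y' x]
  have hsmul2 : ∀ (c : ℂ) (x y : X), B x (c • y) = c * B x y := by
    intro c x y; rw [hswap, hsmul1, hswap]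
  have hB0 : ∀ y, B 0 y = 0 := by
    intro y
    have := hsmul1 0 0 y
    simpa using this
  have hexp : ∀ (c : ℂ) (x z : X),
      P (x + c • z) = P x + c * B z x + c * B x z + c * (c * P z) := by
    intro c x z
    rw [hPB, hPB, hPB, hadd1, hadd2, hadd2, hsmul1, hsmul2, hsmul2, hsmul1]
    ring
  have hpolar : ∀ x y, B x y = (P (x + y) - P (x - y)) / 4 := by
    intro x y
    have h1 := hexp 1 x y
    have h2 := hexp (-1) x y
    rw [one_smul] at h1
    rw [neg_smul, one_smul, ← sub_eq_add_neg] at h2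
    have hs := hswap y x
    linear_combination (h2 - h1) / 4 - hs / 2
  -- continuity of the associated functionals
  have hCpos : 0 < C := by
    have hx0 : ∃ x, P x ≠ 0 := by
      by_contra h; push_neg at h; exact hP0 (funext h)
    obtain ⟨x₀, hx₀⟩ := hx0
    have hx₀0 : x₀ ≠ 0 := by
      rintro rfl
      exact hx₀ (by rw [hPB]; exact hB0 0)
    have h1 := hC x₀
    have h2 : 0 < ‖P x₀‖ := norm_pos_iff.mpr hx₀
    have h3 : 0 < ‖x₀‖ := norm_pos_iff.mpr hx₀0
    nlinarith
  have hbound : ∀ y x, ‖B x y‖ ≤ (C * (1 + ‖y‖) ^ 2 / 2) * ‖x‖ := by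
    intro y x
    rcases eq_or_ne x 0 with rfl | hx
    · simp [hB0]
    · have hxn : (0:ℝ) < ‖x‖ := norm_pos_iff.mpr hx
      set u : X := ((‖x‖⁻¹ : ℝ) : ℂ) • x with hu
      have hun : ‖u‖ = 1 := by
        rw [hu, norm_smul, Complex.norm_real, Real.norm_eq_abs,
          abs_of_pos (inv_pos.mpr hxn), inv_mul_cancel₀ hxn.ne']
      have hxu : x = ((‖x‖ : ℝ) : ℂ) • u := by
        rw [hu, smul_smul, ← Complex.ofReal_mul, mul_inv_cancel₀ hxn.ne']
        simp
      have hBu : ‖B u y‖ ≤ C * (1 + ‖y‖) ^ 2 / 2 := by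
        have h1 : ‖P (u + y)‖ ≤ C * (1 + ‖y‖) ^ 2 := by
          have h := hC (u + y)
          have hn : ‖u + y‖ ≤ 1 + ‖y‖ := by
            rw [← hun]; exact norm_add_le _ _
          have hsq : ‖u + y‖ ^ 2 ≤ (1 + ‖y‖) ^ 2 := by
            nlinarith [norm_nonneg (u + y)]
          calc ‖P (u + y)‖ ≤ C * ‖u + y‖ ^ 2 := h
            _ ≤ C * (1 + ‖y‖) ^ 2 := mul_le_mul_of_nonneg_left hsq hCpos.le
        have h2 : ‖P (u - y)‖ ≤ C * (1 + ‖y‖) ^ 2 := by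
          have h := hC (u - y)
          have hn : ‖u - y‖ ≤ 1 + ‖y‖ := by
            rw [← hun]; exact norm_sub_le _ _
          have hsq : ‖u - y‖ ^ 2 ≤ (1 + ‖y‖) ^ 2 := by
            nlinarith [norm_nonneg (u - y)]
          calc ‖P (u - y)‖ ≤ C * ‖u - y‖ ^ 2 := h
            _ ≤ C * (1 + ‖y‖) ^ 2 := mul_le_mul_of_nonneg_left hsq hCpos.le
        rw [hpolar]
        have h3 : ‖P (u + y) - P (u - y)‖ ≤ ‖P (u + y)‖ + ‖P (u - y)‖ :=
          norm_sub_le _ _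
        have h4 : ‖(P (u + y) - P (u - y)) / 4‖ = ‖P (u + y) - P (u - y)‖ / 4 := by
          rw [norm_div]; norm_num
        rw [h4]; linarith
      have hBx : ‖B x y‖ = ‖x‖ * ‖B u y‖ := by
        conv_lhs => rw [hxu]
        rw [hsmul1, norm_mul, Complex.norm_real, Real.norm_eq_abs, abs_of_pos hxn]
      rw [hBx]
      calc ‖x‖ * ‖B u y‖ ≤ ‖x‖ * (C * (1 + ‖y‖) ^ 2 / 2) := by
            exact mul_le_mul_of_nonneg_left hBu hxn.le
        _ = (C * (1 + ‖y‖) ^ 2 / 2) * ‖x‖ := by ring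
  let L : X → (X →ₗ[ℂ] ℂ) := fun y =>
    { toFun := fun x => B x y
      map_add' := fun a b => hadd1 a b y
      map_smul' := fun c a => hsmul1 c a y }
  let φ : X → (X →L[ℂ] ℂ) := fun y =>
    LinearMap.mkContinuousOfExistsBound (L y) ⟨_, hbound y⟩
  have hφ : ∀ y x, φ y x = B x y := fun y x => rfl
  -- countable dense subset of M
  obtain ⟨D, hDM, hDc, hMD⟩ := hMsep.exists_countable_dense_subset
  have hD'M : insert (0:X) D ⊆ (M : Set X) :=
    Set.insert_subset_iff.mpr ⟨M.zero_mem, hDM⟩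
  obtain ⟨d, hd⟩ := Set.Countable.exists_eq_range (hDc.insert 0) ⟨0, Set.mem_insert _ _⟩
  have hdM : ∀ n, d n ∈ M := fun n => hD'M (hd ▸ Set.mem_range_self n)
  have hMM : ∀ x ∈ M, ∀ y ∈ M, B x y = 0 := by
    intro x hx y hy
    rw [hpolar, hM.2.1 _ (M.add_mem hx hy), hM.2.1 _ (M.sub_mem hx hy)]
    norm_num
  set K := ⨅ n, LinearMap.ker (φ (d n) : X →ₗ[ℂ] ℂ) with hKdef
  have hMK : M ≤ K := by
    intro x hx
    rw [hKdef, Submodule.mem_iInf]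
    intro n
    show φ (d n) x = 0
    rw [hφ]
    exact hMM x hx (d n) (hdM n)
  have hKperp : ∀ x, x ∈ K → ∀ y ∈ M, B x y = 0 := by
    intro x hxK y hy
    have hclosed : IsClosed {w : X | B x w = 0} := by
      have hset : {w : X | B x w = 0} = (φ x) ⁻¹' {0} := by
        ext w
        simp only [Set.mem_setOf_eq, Set.mem_preimage, Set.mem_singleton_iff, hφ, hswap w x]
      rw [hset]
      exact IsClosed.preimage (φ x).continuous isClosed_singleton
    have hDsub : insert (0:X) D ⊆ {w : X | B x w = 0} := by
      intro w hw
      rw [hd] at hw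
      obtain ⟨n, rfl⟩ := hw
      have h := (Submodule.mem_iInf _).mp (hKdef ▸ hxK) n
      simpa [hφ] using h
    have hMsub : (M : Set X) ⊆ {w : X | B x w = 0} :=
      (hMD.trans (closure_mono (Set.subset_insert _ _))).trans
        (hclosed.closure_subset_iff.mpr hDsub)
    exact hMsub hy
  have hmem : ∀ u, (∀ y ∈ M, B u y = 0) → P u = 0 → u ∈ M := by
    intro u hperp hPu
    have h1 : ∀ x ∈ M ⊔ (ℂ ∙ u), P x = 0 := by
      intro x hx
      rw [Submodule.mem_sup] at hx
      obtain ⟨m, hm, w, hw, rfl⟩ := hx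
      rw [Submodule.mem_span_singleton] at hw
      obtain ⟨c, rfl⟩ := hw
      rw [hexp, hM.2.1 m hm, hperp m hm, hswap m u, hperp m hm, hPu]
      ring
    have h2 := hM.2.2 _ le_sup_left h1
    have h3 : u ∈ M ⊔ (ℂ ∙ u) :=
      Submodule.mem_sup_right (Submodule.mem_span_singleton_self u)
    rwa [h2] at h3
  have hnotM : ∀ z, z ∈ K → z ∉ M → P z ≠ 0 := by
    intro z hzK hzM hPz
    exact hzM (hmem z (hKperp z hzK) hPz)
  by_cases hKM : K ≤ M
  · exact ⟨fun n => φ (d n), le_antisymm hMK hKM⟩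
  · obtain ⟨z, hzK, hzM⟩ := SetLike.not_le_iff_exists.mp hKM
    have hPz := hnotM z hzK hzM
    refine ⟨fun n => Nat.casesOn n (φ z) (fun k => φ (d k)), ?_⟩
    apply le_antisymm
    · intro x hx
      rw [Submodule.mem_iInf]
      intro n
      cases n with
      | zero =>
        show φ z x = 0
        rw [hφ, hswap x z]
        exact hKperp z hzK x hx
      | succ k =>
        exact (Submodule.mem_iInf _).mp (hMK hx) k
    · intro x hx
      rw [Submodule.mem_iInf] at hx
      have hxK : x ∈ K := by
        rw [hKdef, Submodule.mem_iInf]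
        intro n
        exact hx (n + 1)
      have hxz : B x z = 0 := by
        have h := hx 0
        simpa [hφ] using h
      by_contra hxM
      have hPx := hnotM x hxK hxM
      obtain ⟨b, hb⟩ := IsAlgClosed.exists_pow_nat_eq (-(P x) / (P z)) (n := 2) two_pos
      have hb0 : b ≠ 0 := by
        intro h
        rw [h] at hb
        have : P x = 0 := by
          field_simp at hb
          linear_combination hb
        exact hPx this
      have hb2 : b ^ 2 * P z = -(P x) := by
        rw [hb]; field_simp
      have hzx : B z x = 0 := by rw [hswap]; exact hxz
      have hPu : P (x + b • z) = 0 := by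
        rw [hexp, hxz, hzx]
        linear_combination hb2
      have hPu' : P (x + (-b) • z) = 0 := by
        rw [hexp, hxz, hzx]
        linear_combination hb2
      have hperpu : ∀ y ∈ M, B (x + b • z) y = 0 := by
        intro y hy
        rw [hadd1, hsmul1, hKperp x hxK y hy, hKperp z hzK y hy]
        ring
      have hperpu' : ∀ y ∈ M, B (x + (-b) • z) y = 0 := by
        intro y hy
        rw [hadd1, hsmul1, hKperp x hxK y hy, hKperp z hzK y hy]
        ring
      have hu : x + b • z ∈ M := hmem _ hperpu hPu
      have hu' : x + (-b) • z ∈ M := hmem _ hperpu' hPu'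
      have hz2 : ((2 * b) • z) ∈ M := by
        have hsub := M.sub_mem hu hu'
        have heq : (x + b • z) - (x + (-b) • z) = (2 * b) • z := by
          module
        rwa [heq] at hsub
      have hzM' : z ∈ M := by
        have h := M.smul_mem (2 * b)⁻¹ hz2
        rwa [smul_smul, inv_mul_cancel₀ (mul_ne_zero two_ne_zero hb0), one_smul] at h
      exact hzM hzM'
end
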